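/- For the dimer random sequence w (with w(2n)=ε_n, w(2n+1)=−ε_n for i.i.d. uniform signs ε_n ∈ {±1}), the factor sequence v(n) = −w(n)w(n+1) almost surely has autocorrelation coefficients η(m) = lim_{N→∞} (1/(2N+1)) ∑_{n=−N}^{N} v(n)v(n+m) given by η(0)=1, η(m)=1/2 for even m ≠ 0, and η(m)=0 for odd m. -/

import Mathlib

open MeasureTheory ProbabilityTheory Filter

/-- The dimer random sequence: `w(2n) = ε_n`, `w(2n+1) = -ε_n`. -/
noncomputable def dimerSeq {Ω : Type*} (ε : ℤ → Ω → ℝ) (ω : Ω) (n : ℤ) : ℝ :=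
  if Even n then ε (n / 2) ω else -(ε ((n - 1) / 2) ω)

/-- The factor sequence `v(n) = -w(n)w(n+1)`. -/
noncomputable def dimerFactorSeq {Ω : Type*} (ε : ℤ → Ω → ℝ) (ω : Ω) (n : ℤ) : ℝ :=
  -(dimerSeq ε ω n * dimerSeq ε ω (n + 1))


lemma nat_sqrt_tendsto : Tendsto Nat.sqrt atTop atTop := by
  apply tendsto_atTop_atTop.2
  intro b
  refine ⟨b*b, fun a ha => ?_⟩
  exact Nat.le_sqrt.2 ha

lemma det_fill (s : ℕ → ℝ) (hstep : ∀ N, |s (N+1) - s N| ≤ 2)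
    (h2 : Tendsto (fun K : ℕ => s (K^2) / (2*(K^2 : ℝ)+1)) atTop (nhds 0)) :
    Tendsto (fun N : ℕ => s N / (2*(N:ℝ)+1)) atTop (nhds 0) := by
  have key : ∀ a d : ℕ, |s (a+d) - s a| ≤ 2*d := by
    intro a d
    induction d with
    | zero => simp
    | succ d ih =>
      have := hstep (a+d)
      have : |s (a+d+1) - s a| ≤ |s (a+d+1) - s (a+d)| + |s (a+d) - s a| := by
        have := abs_sub_le (s (a+d+1)) (s (a+d)) (s a)
        linarith [this]
      push_cast
      have h1 := hstep (a+d)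
      have : |s (a+d+1) - s a| ≤ 2 + 2*d := by
        calc |s (a+d+1) - s a| ≤ |s (a+d+1) - s (a+d)| + |s (a+d) - s a| := this
        _ ≤ 2 + 2*d := by gcongr
      calc |s (a + (d+1)) - s a| = |s (a+d+1) - s a| := by ring_nf
      _ ≤ 2 + 2*d := this
      _ = 2 * (d+1) := by ring
  set u : ℕ → ℝ := fun K => |s (K^2) / (2*(K^2:ℝ)+1)| + (4*K+2) / (2*(K^2:ℝ)+1) with hu
  have hu0 : Tendsto u atTop (nhds 0) := by
    have t1 : Tendsto (fun K : ℕ => |s (K^2) / (2*(K^2:ℝ)+1)|) atTop (nhds 0) := by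
      simpa using h2.abs
    have t2 : Tendsto (fun K : ℕ => (4*(K:ℝ)+2) / (2*(K^2:ℝ)+1)) atTop (nhds 0) := by
      apply squeeze_zero' (g := fun K : ℕ => 6 / (K:ℝ))
      · filter_upwards [eventually_ge_atTop 1] with K hK
        positivity
      · filter_upwards [eventually_ge_atTop 1] with K hK
        rw [div_le_div_iff₀ (by positivity) (by exact_mod_cast Nat.pos_of_ne_zero (by omega))]
        have : (1:ℝ) ≤ K := by exact_mod_cast hK
        nlinarith [sq_nonneg ((K:ℝ) - 1)]
      · exact tendsto_const_div_atTop_nhds_zero_nat 6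
    simpa using t1.add t2
  have hcomp : Tendsto (fun N => u (Nat.sqrt N)) atTop (nhds 0) :=
    hu0.comp nat_sqrt_tendsto
  apply squeeze_zero_norm _ hcomp
  intro N
  set K := Nat.sqrt N with hK
  have h1 : K^2 ≤ N := by rw [hK]; exact Nat.sqrt_le' N
  have h2' : N < (K+1)^2 := by rw [hK]; exact Nat.lt_succ_sqrt' N
  have hd : N - K^2 ≤ 2*K := by
    have hexp : (K+1)^2 = K^2+2*K+1 := by ring
    omega
  have hsN : |s N| ≤ |s (K^2)| + 2*(2*K) := by
    have := key (K^2) (N - K^2)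
    rw [Nat.add_sub_cancel' h1] at this
    have h3 : |s N| ≤ |s N - s (K^2)| + |s (K^2)| := by
      have h := abs_add_le (s N - s (K^2)) (s (K^2))
      rwa [sub_add_cancel] at h
    have h4 : (2:ℝ)*(N - K^2 : ℕ) ≤ 2*(2*K) := by
      have : ((N - K^2 : ℕ):ℝ) ≤ 2*K := by exact_mod_cast hd
      linarith
    linarith [this]
  have hden : (2*(K^2:ℝ)+1) ≤ 2*(N:ℝ)+1 := by
    have : (K^2:ℝ) ≤ N := by exact_mod_cast h1
    linarith
  have hdpos : (0:ℝ) < 2*(K^2:ℝ)+1 := by positivity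
  have hdpos2 : (0:ℝ) < 2*(N:ℝ)+1 := by positivity
  calc ‖s N / (2*(N:ℝ)+1)‖ = |s N| / (2*(N:ℝ)+1) := by rw [Real.norm_eq_abs, abs_div, abs_of_pos hdpos2]
  _ ≤ (|s (K^2)| + 2*(2*K)) / (2*(N:ℝ)+1) := by gcongr
  _ ≤ (|s (K^2)| + 2*(2*K)) / (2*(K^2:ℝ)+1) := by gcongr
  _ ≤ u K := by
      show _ ≤ |s (K^2) / (2*(K^2:ℝ)+1)| + (4*(K:ℝ)+2) / (2*(K^2:ℝ)+1)
      rw [abs_div, abs_of_pos hdpos, ← add_div]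
      gcongr
      linarith

lemma slln_aux {Ω : Type*} [MeasurableSpace Ω] (μ : Measure Ω) [IsProbabilityMeasure μ]
    (g : ℤ → Ω → ℝ) (L : ℕ)
    (hm : ∀ n, Measurable (g n))
    (hb : ∀ᵐ ω ∂μ, ∀ n, |g n ω| ≤ 1)
    (hc : ∀ n n' : ℤ, (L:ℤ) ≤ |n - n'| → ∫ ω, g n ω * g n' ω ∂μ = 0) :
    ∀ᵐ ω ∂μ, Tendsto
      (fun N : ℕ => (∑ n ∈ Finset.Icc (-(N : ℤ)) N, g n ω) / (2 * (N:ℝ) + 1))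
      atTop (nhds 0) := by
  set S : ℕ → Ω → ℝ := fun N ω => ∑ n ∈ Finset.Icc (-(N : ℤ)) N, g n ω with hS
  -- integrability of products
  have hint : ∀ n n' : ℤ, Integrable (fun ω => g n ω * g n' ω) μ := by
    intro n n'
    apply Integrable.mono' (integrable_const (1:ℝ))
      (((hm n).mul (hm n')).aestronglyMeasurable)
    filter_upwards [hb] with ω hω
    rw [Real.norm_eq_abs, Pi.mul_apply, abs_mul]
    calc |g n ω| * |g n' ω| ≤ 1 * 1 :=
          mul_le_mul (hω n) (hω n') (abs_nonneg _) zero_le_one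
    _ = 1 := by ring
  have hSmeas : ∀ N, Measurable (S N) := fun N =>
    Finset.measurable_sum _ fun n _ => hm n
  -- variance bound
  have hvar : ∀ N : ℕ, ∫ ω, (S N ω)^2 ∂μ ≤ (2*(N:ℝ)+1) * (2*(L:ℝ)+1) := by
    intro N
    have hexp : ∫ ω, (S N ω)^2 ∂μ
        = ∑ n ∈ Finset.Icc (-(N : ℤ)) N, ∑ n' ∈ Finset.Icc (-(N : ℤ)) N,
            ∫ ω, g n ω * g n' ω ∂μ := by
      have hsq : ∀ ω, (S N ω)^2 = ∑ n ∈ Finset.Icc (-(N : ℤ)) N,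
          ∑ n' ∈ Finset.Icc (-(N : ℤ)) N, g n ω * g n' ω := by
        intro ω
        rw [sq, hS]
        exact Finset.sum_mul_sum _ _ _ _
      simp_rw [hsq]
      rw [integral_finset_sum _ (fun n _ => integrable_finset_sum _ fun n' _ => hint n n')]
      exact Finset.sum_congr rfl fun n _ => integral_finset_sum _ fun n' _ => hint n n'
    rw [hexp]
    have hcard : (Finset.Icc (-(N : ℤ)) N).card = 2*N+1 := by
      rw [Int.card_Icc]; omega
    calc ∑ n ∈ Finset.Icc (-(N : ℤ)) N, ∑ n' ∈ Finset.Icc (-(N : ℤ)) N,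
            ∫ ω, g n ω * g n' ω ∂μ
        ≤ ∑ _n ∈ Finset.Icc (-(N : ℤ)) N, (2*(L:ℝ)+1) := by
          apply Finset.sum_le_sum
          intro n _
          have hzero : ∀ n' ∈ Finset.Icc (-(N : ℤ)) N,
              n' ∉ Finset.Icc (n-(L:ℤ)+1) (n+(L:ℤ)-1) →
              ∫ ω, g n ω * g n' ω ∂μ = 0 := by
            intro n' _ hn'
            apply hc
            simp only [Finset.mem_Icc, not_and_or, not_le] at hn'
            rcases abs_cases (n - n') with ⟨h1,h2⟩|⟨h1,h2⟩ <;> omega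
          have hfil : ∑ n' ∈ Finset.Icc (-(N : ℤ)) N, ∫ ω, g n ω * g n' ω ∂μ
              = ∑ n' ∈ (Finset.Icc (-(N : ℤ)) N).filter
                  (fun n' => n' ∈ Finset.Icc (n-(L:ℤ)+1) (n+(L:ℤ)-1)),
                  ∫ ω, g n ω * g n' ω ∂μ := by
            rw [Finset.sum_filter_of_ne]
            intro x hx hne
            by_contra hmem
            exact hne (hzero x hx hmem)
          rw [hfil]
          have hterm : ∀ n' : ℤ, ∫ ω, g n ω * g n' ω ∂μ ≤ 1 := by
            intro n'
            have hone : (1:ℝ) = ∫ _ω, (1:ℝ) ∂μ := by simp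
            rw [hone]
            apply integral_mono_ae (hint n n') (integrable_const 1)
            filter_upwards [hb] with ω hω
            calc g n ω * g n' ω ≤ |g n ω * g n' ω| := le_abs_self _
            _ ≤ 1 := by
                rw [abs_mul]
                calc |g n ω| * |g n' ω| ≤ 1 * 1 :=
                  mul_le_mul (hω n) (hω n') (abs_nonneg _) zero_le_one
                _ = 1 := by ring
          calc ∑ n' ∈ (Finset.Icc (-(N : ℤ)) N).filter
                  (fun n' => n' ∈ Finset.Icc (n-(L:ℤ)+1) (n+(L:ℤ)-1)),
                  ∫ ω, g n ω * g n' ω ∂μ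
              ≤ ∑ _n' ∈ (Finset.Icc (-(N : ℤ)) N).filter
                  (fun n' => n' ∈ Finset.Icc (n-(L:ℤ)+1) (n+(L:ℤ)-1)), (1:ℝ) :=
                Finset.sum_le_sum fun n' _ => hterm n'
          _ = ((Finset.Icc (-(N : ℤ)) N).filter
                  (fun n' => n' ∈ Finset.Icc (n-(L:ℤ)+1) (n+(L:ℤ)-1))).card := by
                rw [Finset.sum_const]; simp
          _ ≤ ((Finset.Icc (n-(L:ℤ)+1) (n+(L:ℤ)-1)).card : ℝ) := by
                have hsub : (Finset.Icc (-(N : ℤ)) N).filter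
                    (fun n' => n' ∈ Finset.Icc (n-(L:ℤ)+1) (n+(L:ℤ)-1))
                    ⊆ Finset.Icc (n-(L:ℤ)+1) (n+(L:ℤ)-1) := by
                  intro x hx
                  exact (Finset.mem_filter.mp hx).2
                exact_mod_cast Finset.card_le_card hsub
          _ ≤ 2*(L:ℝ)+1 := by
                rw [Int.card_Icc]
                have : (n + (L:ℤ) - 1 + 1 - (n - (L:ℤ) + 1)).toNat ≤ 2*L := by omega
                calc ((n + (L:ℤ) - 1 + 1 - (n - (L:ℤ) + 1)).toNat : ℝ) ≤ (2*L : ℕ) := by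
                      exact_mod_cast this
                _ ≤ 2*(L:ℝ)+1 := by push_cast; linarith
      _ = (2*(N:ℝ)+1) * (2*(L:ℝ)+1) := by
          rw [Finset.sum_const, hcard]
          push_cast
          ring
  -- integrability of S N ^ 2
  have hbS : ∀ N : ℕ, ∀ᵐ ω ∂μ, |S N ω| ≤ 2*(N:ℝ)+1 := by
    intro N
    filter_upwards [hb] with ω hω
    calc |S N ω| ≤ ∑ n ∈ Finset.Icc (-(N : ℤ)) N, |g n ω| :=
        Finset.abs_sum_le_sum_abs _ _
    _ ≤ ∑ _n ∈ Finset.Icc (-(N : ℤ)) N, (1:ℝ) := Finset.sum_le_sum fun n _ => hω n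
    _ = ((Finset.Icc (-(N : ℤ)) N).card : ℝ) := by rw [Finset.sum_const]; simp
    _ = 2*(N:ℝ)+1 := by
        rw [Int.card_Icc]
        have h : ((N:ℤ)+1 - -(N:ℤ)).toNat = 2*N+1 := by omega
        rw [h]; push_cast; ring
  have hintS : ∀ N : ℕ, Integrable (fun ω => (S N ω)^2) μ := by
    intro N
    apply Integrable.mono' (integrable_const ((2*(N:ℝ)+1)^2))
      (((hSmeas N).pow_const 2).aestronglyMeasurable)
    filter_upwards [hbS N] with ω hω
    rw [Real.norm_eq_abs, abs_pow]
    rw [← sq_abs (2*(N:ℝ)+1)] <;> try skip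
    have h2 : |2*(N:ℝ)+1| = 2*(N:ℝ)+1 := abs_of_pos (by positivity)
    rw [h2]
    exact pow_le_pow_left₀ (abs_nonneg _) hω 2
  -- the squared normalized subsequence
  set F : ℕ → Ω → ℝ := fun K ω => (S (K^2) ω / (2*((K^2 : ℕ):ℝ)+1))^2 with hF
  have hFmeas : ∀ K, Measurable (F K) := fun K =>
    ((hSmeas (K^2)).div_const _).pow_const 2
  have hFnonneg : ∀ K ω, 0 ≤ F K ω := fun K ω => sq_nonneg _
  have hFint : ∀ K, Integrable (F K) μ := by
    intro K
    have : F K = fun ω => (S (K^2) ω)^2 * (1 / (2*((K^2 : ℕ):ℝ)+1)^2) := by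
      funext ω
      rw [hF]
      field_simp
    rw [this]
    exact (hintS (K^2)).mul_const _
  set b : ℕ → ℝ := fun K => (2*(2*(L:ℝ)+1)) * (1 / ((K:ℝ)+1)^2) with hbdef
  have hFb : ∀ K, ∫ ω, F K ω ∂μ ≤ b K := by
    intro K
    have hc2 : (0:ℝ) < 2*((K^2 : ℕ):ℝ)+1 := by positivity
    have hrw : ∫ ω, F K ω ∂μ = (∫ ω, (S (K^2) ω)^2 ∂μ) / (2*((K^2 : ℕ):ℝ)+1)^2 := by
      rw [hF]
      simp_rw [div_pow]
      exact integral_div _ _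
    rw [hrw, hbdef]
    have hA : (0:ℝ) ≤ 2*(L:ℝ)+1 := by positivity
    have h2 : ((K:ℝ)+1)^2 ≤ 2*(2*((K^2 : ℕ):ℝ)+1) := by push_cast; nlinarith [sq_nonneg ((K:ℝ)-1)]
    have h3 : (0:ℝ) < ((K:ℝ)+1)^2 := by positivity
    rw [div_le_iff₀ (by positivity)]
    have hcalc : 2*(2*(L:ℝ)+1) * (1/((K:ℝ)+1)^2) * (2*((K^2:ℕ):ℝ)+1)^2
        = (2*(2*(L:ℝ)+1)*(2*((K^2:ℕ):ℝ)+1)^2)/((K:ℝ)+1)^2 := by ring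
    rw [hcalc, le_div_iff₀ h3]
    nlinarith [hvar (K^2), mul_le_mul_of_nonneg_left h2 (mul_nonneg hc2.le hA),
      mul_nonneg (mul_nonneg hc2.le hA) (sq_nonneg ((K:ℝ)+1))]
  -- summability
  have hbsum : Summable b := by
    rw [hbdef]
    apply Summable.mul_left
    have h0 : Summable (fun K : ℕ => 1 / ((K:ℝ))^2) :=
      Real.summable_one_div_nat_pow.mpr one_lt_two
    have := (summable_nat_add_iff 1).mpr h0
    simpa using this
  have hbnonneg : ∀ K, 0 ≤ b K := by
    intro K; rw [hbdef]; positivity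
  -- lintegral bound
  have hlin : ∀ K, ∫⁻ ω, ENNReal.ofReal (F K ω) ∂μ ≤ ENNReal.ofReal (b K) := by
    intro K
    rw [← ofReal_integral_eq_lintegral_ofReal (hFint K)
      (Filter.Eventually.of_forall (hFnonneg K))]
    exact ENNReal.ofReal_le_ofReal (hFb K)
  have htsum : ∑' K, ∫⁻ ω, ENNReal.ofReal (F K ω) ∂μ ≠ ⊤ := by
    apply ne_top_of_le_ne_top (b := ENNReal.ofReal (∑' K, b K))
    · exact ENNReal.ofReal_ne_top
    · rw [ENNReal.ofReal_tsum_of_nonneg hbnonneg hbsum]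
      exact ENNReal.tsum_le_tsum hlin
  have hlint : ∫⁻ ω, ∑' K, ENNReal.ofReal (F K ω) ∂μ ≠ ⊤ := by
    rw [lintegral_tsum (fun K => ((hFmeas K).ennreal_ofReal).aemeasurable)]
    exact htsum
  have haefin : ∀ᵐ ω ∂μ, (∑' K, ENNReal.ofReal (F K ω)) < ⊤ :=
    ae_lt_top (Measurable.ennreal_tsum fun K => (hFmeas K).ennreal_ofReal) hlint
  filter_upwards [haefin, hb] with ω hfin hbω
  -- subsequence convergence
  have htend0 : Tendsto (fun K => ENNReal.ofReal (F K ω)) atTop (nhds 0) :=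
    ENNReal.tendsto_atTop_zero_of_tsum_ne_top hfin.ne
  have htendF : Tendsto (fun K => F K ω) atTop (nhds 0) := by
    have h := (ENNReal.tendsto_toReal (by simp : (0:ENNReal) ≠ ⊤)).comp htend0
    simp only [ENNReal.toReal_zero] at h
    convert h using 1
    funext K
    simp [Function.comp, ENNReal.toReal_ofReal (hFnonneg K ω)]
  have hsub : Tendsto (fun K : ℕ => S (K^2) ω / (2*((K^2 : ℕ):ℝ)+1)) atTop (nhds 0) := by
    apply squeeze_zero_norm (a := fun K => Real.sqrt (F K ω))
    · intro K
      rw [Real.norm_eq_abs, hF]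
      rw [Real.sqrt_sq_eq_abs]
    · have h := (Real.continuous_sqrt.tendsto 0).comp htendF
      simpa [Function.comp_def] using h
  -- fill in
  have hstep : ∀ N : ℕ, |S (N+1) ω - S N ω| ≤ 2 := by
    intro N
    have hins : Finset.Icc (-((N:ℤ)+1)) ((N:ℤ)+1)
        = insert (-((N:ℤ)+1)) (insert ((N:ℤ)+1) (Finset.Icc (-(N:ℤ)) (N:ℤ))) := by
      ext x
      simp only [Finset.mem_Icc, Finset.mem_insert]
      omega
    have hne1 : -((N:ℤ)+1) ∉ insert ((N:ℤ)+1) (Finset.Icc (-(N:ℤ)) (N:ℤ)) := by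
      simp only [Finset.mem_insert, Finset.mem_Icc]
      omega
    have hne2 : ((N:ℤ)+1) ∉ Finset.Icc (-(N:ℤ)) (N:ℤ) := by
      simp only [Finset.mem_Icc]
      omega
    have : S (N+1) ω = g (-((N:ℤ)+1)) ω + (g ((N:ℤ)+1) ω + S N ω) := by
      rw [hS]
      push_cast
      rw [hins, Finset.sum_insert hne1, Finset.sum_insert hne2]
    rw [this]
    have h1 := hbω (-((N:ℤ)+1))
    have h2 := hbω ((N:ℤ)+1)
    rw [abs_le] at h1 h2 ⊢
    constructor <;> [linarith [h1.1, h2.1]; linarith [h1.2, h2.2]]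
  simp only [Nat.cast_pow] at hsub
  exact det_fill (fun N => S N ω) hstep hsub

section Dimer
variable {Ω : Type*} [MeasurableSpace Ω] (μ : Measure Ω) [IsProbabilityMeasure μ]
  (ε : ℤ → Ω → ℝ) (hmeas : ∀ n, Measurable (ε n))
  (hindep : iIndepFun ε μ)
  (hone : ∀ n, μ {ω | ε n ω = 1} = 1 / 2)
  (hmone : ∀ n, μ {ω | ε n ω = -1} = 1 / 2)

include hmeas hone hmone in
lemma eps_ae_pm : ∀ᵐ ω ∂μ, ∀ n : ℤ, ε n ω = 1 ∨ ε n ω = -1 := by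
  rw [MeasureTheory.ae_all_iff]
  intro n
  have hA : MeasurableSet {ω | ε n ω = 1} := (hmeas n) (measurableSet_singleton 1)
  have hB : MeasurableSet {ω | ε n ω = -1} := (hmeas n) (measurableSet_singleton (-1))
  have hdisj : Disjoint {ω | ε n ω = 1} {ω | ε n ω = -1} := by
    rw [Set.disjoint_left]
    intro ω h1 h2
    simp only [Set.mem_setOf_eq] at h1 h2
    rw [h1] at h2
    norm_num at h2
  have hU : μ ({ω | ε n ω = 1} ∪ {ω | ε n ω = -1}) = 1 := by
    rw [measure_union hdisj hB, hone n, hmone n]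
    rw [ENNReal.div_add_div_same]
    norm_num
    exact ENNReal.div_self (by norm_num) ENNReal.ofNat_ne_top
  have : μ ({ω | ε n ω = 1} ∪ {ω | ε n ω = -1})ᶜ = 0 := by
    rw [measure_compl (hA.union hB) (measure_ne_top _ _), hU, measure_univ]
    simp
  filter_upwards [MeasureTheory.measure_eq_zero_iff_ae_notMem.mp this] with ω hω
  simpa [Set.mem_union, Set.mem_setOf_eq, not_or] using not_not.mp (by
    intro hcon
    exact hω (by
      rcases not_or.mp hcon with ⟨h1, h2⟩
      exact absurd hcon (by simp [Set.mem_union, Set.mem_setOf_eq]; tauto)))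

include hmeas hone hmone in
lemma integral_eps (n : ℤ) : ∫ ω, ε n ω ∂μ = 0 := by
  have hA : MeasurableSet {ω | ε n ω = 1} := (hmeas n) (measurableSet_singleton 1)
  have hB : MeasurableSet {ω | ε n ω = -1} := (hmeas n) (measurableSet_singleton (-1))
  set A := {ω | ε n ω = 1}
  set B := {ω | ε n ω = -1}
  have haeq : ε n =ᵐ[μ] fun ω => Set.indicator A (fun _ => (1:ℝ)) ω
      - Set.indicator B (fun _ => (1:ℝ)) ω := by
    filter_upwards [eps_ae_pm μ ε hmeas hone hmone] with ω hω
    rcases hω n with h | h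
    · have hnB : ω ∉ B := by simp only [B, Set.mem_setOf_eq]; rw [h]; norm_num
      simp [Set.indicator_of_mem (show ω ∈ A from h), Set.indicator_of_notMem hnB, h]
    · have hnA : ω ∉ A := by simp only [A, Set.mem_setOf_eq]; rw [h]; norm_num
      simp [Set.indicator_of_notMem hnA, Set.indicator_of_mem (show ω ∈ B from h), h]
  rw [integral_congr_ae haeq]
  rw [integral_sub (IntegrableOn.integrable_indicator (integrableOn_const (measure_ne_top _ _)) hA)
      (IntegrableOn.integrable_indicator (integrableOn_const (measure_ne_top _ _)) hB)]
  rw [integral_indicator_const _ hA, integral_indicator_const _ hB, measureReal_def, measureReal_def, hone n, hmone n]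
  simp

include hmeas hindep hone hmone in
lemma integral_prod_eps (S : Finset ℤ) (hS : S.Nonempty) :
    ∫ ω, ∏ i ∈ S, ε i ω ∂μ = 0 := by
  obtain ⟨i₀, hi₀⟩ := hS
  have hprod : (fun ω => ∏ i ∈ S, ε i ω)
      = (∏ i ∈ S.erase i₀, ε i) * ε i₀ := by
    funext ω
    simp only [Pi.mul_apply, Finset.prod_apply]
    rw [mul_comm]
    exact (Finset.mul_prod_erase _ _ hi₀).symm
  have hind : IndepFun (∏ i ∈ S.erase i₀, ε i) (ε i₀) μ :=
    hindep.indepFun_finset_prod_of_notMem hmeas (Finset.notMem_erase i₀ S)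
  have hmp : Measurable (∏ i ∈ S.erase i₀, ε i) := by
    have : (∏ i ∈ S.erase i₀, ε i) = fun ω => ∏ i ∈ S.erase i₀, ε i ω :=
      funext fun ω => by simp [Finset.prod_apply]
    rw [this]
    exact Finset.measurable_prod _ fun i _ => hmeas i
  rw [hprod, hind.integral_mul_eq_mul_integral hmp.aestronglyMeasurable (hmeas i₀).aestronglyMeasurable]
  have : ∫ ω, ε i₀ ω ∂μ = 0 := integral_eps μ ε hmeas hone hmone i₀
  simp only [this, mul_zero]

end Dimer


section PM
variable {Ω : Type*} (ε : ℤ → Ω → ℝ) (ω : Ω)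

/-- Index of the `Y`-factor appearing in `v n * v (n+m)` for odd `m`. -/
def aIdx (m n : ℤ) : ℤ := if n % 2 = 0 then n/2 + (m-1)/2 else (n-1)/2

/-- Support of `Y j * Y (j+k)`. -/
def TIdx (k j : ℤ) : Finset ℤ := symmDiff ({j, j+1} : Finset ℤ) ({j+k, j+k+1} : Finset ℤ)

lemma prod_mul_prod_pm (hω : ∀ n, ε n ω = 1 ∨ ε n ω = -1) (A B : Finset ℤ) :
    (∏ i ∈ A, ε i ω) * (∏ i ∈ B, ε i ω) = ∏ i ∈ symmDiff A B, ε i ω := by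
  have hsq : ∏ i ∈ A ∩ B, (ε i ω * ε i ω) = 1 := by
    apply Finset.prod_eq_one
    intro i _
    rcases hω i with h | h <;> rw [h] <;> norm_num
  have hA : A = (A \ B) ∪ (A ∩ B) := (Finset.sdiff_union_inter A B).symm
  have hB : B = (B \ A) ∪ (B ∩ A) := (Finset.sdiff_union_inter B A).symm
  have hdA : Disjoint (A \ B) (A ∩ B) := by
    rw [Finset.disjoint_left]
    intro x hx hx2
    simp only [Finset.mem_sdiff, Finset.mem_inter] at hx hx2
    exact hx.2 hx2.2
  have hdB : Disjoint (B \ A) (B ∩ A) := by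
    rw [Finset.disjoint_left]
    intro x hx hx2
    simp only [Finset.mem_sdiff, Finset.mem_inter] at hx hx2
    exact hx.2 hx2.2
  calc (∏ i ∈ A, ε i ω) * (∏ i ∈ B, ε i ω)
      = ((∏ i ∈ A \ B, ε i ω) * (∏ i ∈ A ∩ B, ε i ω))
        * ((∏ i ∈ B \ A, ε i ω) * (∏ i ∈ B ∩ A, ε i ω)) := by
        rw [← Finset.prod_union hdA, ← Finset.prod_union hdB, ← hA, ← hB]
  _ = ((∏ i ∈ A \ B, ε i ω) * (∏ i ∈ B \ A, ε i ω))
        * ((∏ i ∈ A ∩ B, ε i ω) * (∏ i ∈ A ∩ B, ε i ω)) := by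
        rw [Finset.inter_comm B A]; ring
  _ = ((∏ i ∈ A \ B, ε i ω) * (∏ i ∈ B \ A, ε i ω)) * 1 := by
        rw [← Finset.prod_mul_distrib, hsq]
  _ = ∏ i ∈ symmDiff A B, ε i ω := by
        rw [mul_one, symmDiff_def, ← Finset.prod_union (disjoint_sdiff_sdiff)]
        rfl

lemma abs_prod_pm (hω : ∀ n, ε n ω = 1 ∨ ε n ω = -1) (A : Finset ℤ) :
    |∏ i ∈ A, ε i ω| = 1 := by
  rw [Finset.abs_prod]
  apply Finset.prod_eq_one
  intro i _
  rcases hω i with h | h <;> rw [h] <;> norm_num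

lemma dimerSeq_even' (j : ℤ) : dimerSeq ε ω (2*j) = ε j ω := by
  have he : Even (2*j) := ⟨j, two_mul j⟩
  rw [dimerSeq, if_pos he]
  norm_num

lemma dimerSeq_odd' (j : ℤ) : dimerSeq ε ω (2*j+1) = -(ε j ω) := by
  have ho : ¬ Even (2*j+1) := by
    rw [Int.even_add_one, not_not]
    exact ⟨j, two_mul j⟩
  rw [dimerSeq, if_neg ho]
  congr 2
  omega

lemma v_at_even (j : ℤ) : dimerFactorSeq ε ω (2*j) = ε j ω * ε j ω := by
  rw [dimerFactorSeq, dimerSeq_even', dimerSeq_odd']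
  ring

lemma v_at_odd (j : ℤ) : dimerFactorSeq ε ω (2*j+1) = ε j ω * ε (j+1) ω := by
  rw [dimerFactorSeq]
  have h2 : (2*j+1+1 : ℤ) = 2*(j+1) := by ring
  rw [h2, dimerSeq_odd', dimerSeq_even']
  ring

lemma v_at_even_pm (hω : ∀ n, ε n ω = 1 ∨ ε n ω = -1) (j : ℤ) :
    dimerFactorSeq ε ω (2*j) = 1 := by
  rw [v_at_even]
  rcases hω j with h | h <;> rw [h] <;> norm_num

lemma v_at_odd_prod (j : ℤ) :
    dimerFactorSeq ε ω (2*j+1) = ∏ i ∈ ({j, j+1} : Finset ℤ), ε i ω := by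
  rw [v_at_odd, Finset.prod_pair (by omega : j ≠ j+1)]

/-- Representation of `v n * v (n+m)` for odd `m`. -/
lemma rep_odd (m : ℤ) (hm : Odd m) (hω : ∀ n, ε n ω = 1 ∨ ε n ω = -1) (n : ℤ) :
    dimerFactorSeq ε ω n * dimerFactorSeq ε ω (n+m)
      = ∏ i ∈ ({aIdx m n, aIdx m n + 1} : Finset ℤ), ε i ω := by
  obtain ⟨t, ht⟩ := hm
  rcases Int.even_or_odd n with ⟨j, hj⟩ | ⟨j, hj⟩
  · have hn : n = 2*j := by omega
    subst hn
    have ha : aIdx m (2*j) = j + t := by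
      rw [aIdx, if_pos (by omega : (2*j) % 2 = 0)]
      omega
    have hnm : 2*j + m = 2*(j+t)+1 := by omega
    rw [hnm, v_at_even_pm ε ω hω, v_at_odd_prod, ha, one_mul]
  · have hn : n = 2*j+1 := by omega
    subst hn
    have ha : aIdx m (2*j+1) = j := by
      rw [aIdx, if_neg (by omega : ¬ (2*j+1) % 2 = 0)]
      omega
    have hnm : 2*j+1 + m = 2*(j+t+1) := by omega
    rw [hnm, v_at_even_pm ε ω hω, v_at_odd_prod, ha, mul_one]

lemma aIdx_bound (m n : ℤ) (hm : Odd m) : |2 * aIdx m n - n| ≤ |m| + 1 := by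
  obtain ⟨t, ht⟩ := hm
  rw [aIdx]
  rcases abs_cases (2 * (if n % 2 = 0 then n/2 + (m-1)/2 else (n-1)/2) - n) with ⟨e1,e2⟩|⟨e1,e2⟩ <;>
    rcases abs_cases m with ⟨f1,f2⟩|⟨f1,f2⟩ <;>
    by_cases hp : n % 2 = 0 <;> simp only [hp, if_true, if_false] at e1 e2 ⊢ <;> omega

/-- Representation of `v n * v (n+m) - [n even]` for even `m = 2k`. -/
lemma rep_even (k : ℤ) (hω : ∀ n, ε n ω = 1 ∨ ε n ω = -1) (j : ℤ) :
    dimerFactorSeq ε ω (2*j+1) * dimerFactorSeq ε ω ((2*j+1)+2*k)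
      = ∏ i ∈ TIdx k j, ε i ω := by
  have hnm : (2*j+1)+2*k = 2*(j+k)+1 := by ring
  rw [hnm, v_at_odd_prod, v_at_odd_prod, TIdx]
  exact prod_mul_prod_pm ε ω hω _ _

lemma TIdx_mem_bound (k j x : ℤ) (hx : x ∈ TIdx k j) : j - |k| ≤ x ∧ x ≤ j + |k| + 1 := by
  rw [TIdx, Finset.mem_symmDiff] at hx
  rcases abs_cases k with ⟨f1,f2⟩|⟨f1,f2⟩ <;>
  · rcases hx with ⟨h1, _⟩ | ⟨h1, _⟩ <;>
    · simp only [Finset.mem_insert, Finset.mem_singleton] at h1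
      omega

lemma TIdx_wit_mem (k j : ℤ) (hk : k ≠ 0) :
    (if k = -1 then j+1 else j) ∈ TIdx k j := by
  rw [TIdx, Finset.mem_symmDiff]
  by_cases h : k = -1
  · rw [if_pos h]
    left
    constructor
    · simp
    · simp only [Finset.mem_insert, Finset.mem_singleton]
      omega
  · rw [if_neg h]
    left
    constructor
    · simp
    · simp only [Finset.mem_insert, Finset.mem_singleton]
      omega

end PM


section Main
variable {Ω : Type*} [MeasurableSpace Ω] (μ : Measure Ω) [IsProbabilityMeasure μ]
  (ε : ℤ → Ω → ℝ) (hmeas : ∀ n, Measurable (ε n))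

include hmeas in
lemma meas_v : ∀ n : ℤ, Measurable (fun ω => dimerFactorSeq ε ω n) := by
  have hds : ∀ n : ℤ, Measurable (fun ω => dimerSeq ε ω n) := by
    intro n
    by_cases h : Even n
    · simp only [dimerSeq, if_pos h]
      exact hmeas _
    · simp only [dimerSeq, if_neg h]
      exact (hmeas _).neg
  intro n
  exact ((hds n).mul (hds (n+1))).neg

/-- Sum of the even-indicator over the symmetric window. -/
lemma sum_even_indicator (N : ℕ) :
    (∑ n ∈ Finset.Icc (-(N:ℤ)) N, (if n % 2 = 0 then (1:ℝ) else 0))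
      = N + (if (N:ℤ) % 2 = 0 then 1 else 0) := by
  induction N with
  | zero =>
    rw [Nat.cast_zero, neg_zero, Finset.Icc_self, Finset.sum_singleton]
    norm_num
  | succ N ih =>
    have hins : Finset.Icc (-((N:ℤ)+1)) ((N:ℤ)+1)
        = insert (-((N:ℤ)+1)) (insert ((N:ℤ)+1) (Finset.Icc (-(N:ℤ)) (N:ℤ))) := by
      ext x
      simp only [Finset.mem_Icc, Finset.mem_insert]
      omega
    have hne1 : -((N:ℤ)+1) ∉ insert ((N:ℤ)+1) (Finset.Icc (-(N:ℤ)) (N:ℤ)) := by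
      simp only [Finset.mem_insert, Finset.mem_Icc]
      omega
    have hne2 : ((N:ℤ)+1) ∉ Finset.Icc (-(N:ℤ)) (N:ℤ) := by
      simp only [Finset.mem_Icc]
      omega
    have hcast : (((N+1:ℕ)):ℤ) = (N:ℤ)+1 := by push_cast; ring
    rw [show (-(((N+1:ℕ)):ℤ)) = -((N:ℤ)+1) by rw [hcast], hcast]
    rw [hins, Finset.sum_insert hne1, Finset.sum_insert hne2, ih]
    have hpar : (-((N:ℤ)+1)) % 2 = ((N:ℤ)+1) % 2 := by omega
    by_cases h : ((N:ℤ)+1) % 2 = 0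
    · have h' : ¬ ((N:ℤ) % 2 = 0) := by omega
      rw [if_pos h, if_neg h', if_pos (by omega : (-((N:ℤ)+1)) % 2 = 0)]
      push_cast
      ring
    · have h' : (N:ℤ) % 2 = 0 := by omega
      rw [if_neg h, if_pos h', if_neg (by omega : ¬ (-((N:ℤ)+1)) % 2 = 0)]
      push_cast
      ring

lemma tendsto_even_density :
    Tendsto (fun N : ℕ => ((N:ℝ) + (if (N:ℤ) % 2 = 0 then (1:ℝ) else 0)) / (2*(N:ℝ)+1))
      atTop (nhds (1/2)) := by
  have hdiff : Tendsto (fun N : ℕ => ((N:ℝ) + (if (N:ℤ) % 2 = 0 then (1:ℝ) else 0)) / (2*(N:ℝ)+1)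
      - 1/2) atTop (nhds 0) := by
    apply squeeze_zero_norm (a := fun N : ℕ => 1 / (2*(N:ℝ)+1))
    · intro N
      have hpos : (0:ℝ) < 2*(N:ℝ)+1 := by positivity
      by_cases h : (N:ℤ) % 2 = 0
      · rw [if_pos h]
        have heq : ((N:ℝ) + 1) / (2*(N:ℝ)+1) - 1/2 = 1/(2*(2*(N:ℝ)+1)) := by
          field_simp
          ring
        rw [Real.norm_eq_abs, heq, abs_of_pos (by positivity)]
        rw [div_le_div_iff₀ (by positivity) hpos]
        linarith
      · rw [if_neg h]
        have heq : ((N:ℝ) + 0) / (2*(N:ℝ)+1) - 1/2 = -(1/(2*(2*(N:ℝ)+1))) := by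
          field_simp
          ring
        rw [Real.norm_eq_abs, heq, abs_neg, abs_of_pos (by positivity)]
        rw [div_le_div_iff₀ (by positivity) hpos]
        linarith
    · have h1 : Tendsto (fun N : ℕ => 2*(N:ℝ)+1) atTop atTop := by
        apply tendsto_atTop_add_const_right
        exact (tendsto_natCast_atTop_atTop).const_mul_atTop two_pos
      have h2 := h1.inv_tendsto_atTop
      simp only [one_div]
      exact h2
  have := hdiff.add (tendsto_const_nhds (x := (1/2 : ℝ)))
  simpa using this

end Main

/-- Almost surely, the autocorrelation coefficients of the factor sequence
`v(n) = -w(n)w(n+1)` are `η(0)=1`, `η(m)=1/2` for even `m ≠ 0`, and `η(m)=0`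
for odd `m`. -/
theorem dimer_factor_autocorrelation
    {Ω : Type*} [MeasurableSpace Ω] (μ : Measure Ω) [IsProbabilityMeasure μ]
    (ε : ℤ → Ω → ℝ) (hmeas : ∀ n, Measurable (ε n))
    (hindep : iIndepFun ε μ)
    (hone : ∀ n, μ {ω | ε n ω = 1} = 1 / 2)
    (hmone : ∀ n, μ {ω | ε n ω = -1} = 1 / 2) :
    ∀ m : ℤ, ∀ᵐ ω ∂μ, Tendsto
      (fun N : ℕ => (∑ n ∈ Finset.Icc (-(N : ℤ)) N,
        dimerFactorSeq ε ω n * dimerFactorSeq ε ω (n + m)) / (2 * N + 1))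
      atTop (nhds (if m = 0 then 1 else if Even m then 1 / 2 else 0)) := by
  intro m
  have hML : ((2*m.natAbs + 10 : ℕ) : ℤ) = 2*|m| + 10 := by
    rw [Int.abs_eq_natAbs]
    push_cast
    ring
  rcases eq_or_ne m 0 with hm0 | hm0
  · -- m = 0
    subst hm0
    simp only [if_pos rfl]
    filter_upwards [eps_ae_pm μ ε hmeas hone hmone] with ω hω
    have hterm : ∀ n : ℤ, dimerFactorSeq ε ω n * dimerFactorSeq ε ω (n+0) = 1 := by
      intro n
      rw [add_zero]
      rcases Int.even_or_odd n with ⟨j,hj⟩|⟨j,hj⟩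
      · rw [show n = 2*j by omega, v_at_even_pm ε ω hω]
        norm_num
      · rw [show n = 2*j+1 by omega, v_at_odd]
        rcases hω j with h|h <;> rcases hω (j+1) with h'|h' <;> rw [h,h'] <;> norm_num
    have heq : (fun N : ℕ => (∑ n ∈ Finset.Icc (-(N : ℤ)) N,
        dimerFactorSeq ε ω n * dimerFactorSeq ε ω (n + 0)) / (2 * (N:ℝ) + 1))
        = fun _ : ℕ => (1:ℝ) := by
      funext N
      rw [Finset.sum_congr rfl (fun n _ => hterm n), Finset.sum_const, Int.card_Icc]
      have h2 : ((N:ℤ)+1 - -(N:ℤ)).toNat = 2*N+1 := by omega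
      rw [h2]
      have hpos : (0:ℝ) < 2*(N:ℝ)+1 := by positivity
      rw [nsmul_eq_mul, mul_one]
      rw [show ((2*N+1 : ℕ):ℝ) = 2*(N:ℝ)+1 by push_cast; ring]
      rw [div_self (ne_of_gt hpos)]
    rw [heq]
    exact tendsto_const_nhds
  rcases Int.even_or_odd m with hme | hmo
  · -- m even, m ≠ 0
    obtain ⟨k, hk⟩ := hme
    have hm2k : m = 2*k := by omega
    have hk0 : k ≠ 0 := by omega
    have hEv : Even m := ⟨k, hk⟩
    rw [if_neg hm0, if_pos hEv]
    set L : ℕ := 2*m.natAbs + 10 with hL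
    set g : ℤ → Ω → ℝ := fun n ω => dimerFactorSeq ε ω n * dimerFactorSeq ε ω (n+m)
      - (if n % 2 = 0 then 1 else 0) with hg
    have hg_even : ∀ ω, (∀ i : ℤ, ε i ω = 1 ∨ ε i ω = -1) → ∀ j : ℤ, g (2*j) ω = 0 := by
      intro ω hω j
      rw [hg]
      simp only
      rw [if_pos (by omega : (2*j) % 2 = 0)]
      rw [show 2*j + m = 2*(j+k) by omega]
      rw [v_at_even_pm ε ω hω, v_at_even_pm ε ω hω]
      ring
    have hg_odd : ∀ ω, (∀ i : ℤ, ε i ω = 1 ∨ ε i ω = -1) → ∀ j : ℤ,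
        g (2*j+1) ω = ∏ i ∈ TIdx k j, ε i ω := by
      intro ω hω j
      rw [hg]
      simp only
      rw [if_neg (by omega : ¬ (2*j+1) % 2 = 0)]
      rw [show 2*j+1 + m = (2*j+1) + 2*k by omega]
      rw [rep_even ε ω k hω j]
      ring
    have hslln := slln_aux μ g L
      (fun n => ((meas_v ε hmeas n).mul (meas_v ε hmeas (n+m))).sub measurable_const)
      (by
        filter_upwards [eps_ae_pm μ ε hmeas hone hmone] with ω hω n
        rcases Int.even_or_odd n with ⟨j,hj⟩|⟨j,hj⟩
        · rw [show n = 2*j by omega, hg_even ω hω j]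
          norm_num
        · rw [show n = 2*j+1 by omega, hg_odd ω hω j, abs_prod_pm ε ω hω])
      (by
        intro n n' hnn
        rcases Int.even_or_odd n with ⟨j,hj⟩|⟨j,hj⟩
        · have : (fun ω => g n ω * g n' ω) =ᵐ[μ] fun _ => 0 := by
            filter_upwards [eps_ae_pm μ ε hmeas hone hmone] with ω hω
            rw [show n = 2*j by omega, hg_even ω hω j, zero_mul]
          rw [integral_congr_ae this, integral_zero]
        rcases Int.even_or_odd n' with ⟨j',hj'⟩|⟨j',hj'⟩
        · have : (fun ω => g n ω * g n' ω) =ᵐ[μ] fun _ => 0 := by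
            filter_upwards [eps_ae_pm μ ε hmeas hone hmone] with ω hω
            rw [show n' = 2*j' by omega, hg_even ω hω j', mul_zero]
          rw [integral_congr_ae this, integral_zero]
        -- both odd
        have hjj : 2*|k| + 3 ≤ |j - j'| := by
          rw [hL] at hnn
          rw [hML] at hnn
          rcases abs_cases (j - j') with ⟨e1,e2⟩|⟨e1,e2⟩ <;>
            rcases abs_cases (n - n') with ⟨d1,d2⟩|⟨d1,d2⟩ <;>
            rcases abs_cases m with ⟨f1,f2⟩|⟨f1,f2⟩ <;>
            rcases abs_cases k with ⟨p1,p2⟩|⟨p1,p2⟩ <;> omega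
        have haeq : (fun ω => g n ω * g n' ω)
            =ᵐ[μ] fun ω => ∏ i ∈ symmDiff (TIdx k j) (TIdx k j'), ε i ω := by
          filter_upwards [eps_ae_pm μ ε hmeas hone hmone] with ω hω
          rw [show n = 2*j+1 by omega, show n' = 2*j'+1 by omega,
            hg_odd ω hω j, hg_odd ω hω j', prod_mul_prod_pm ε ω hω]
        rw [integral_congr_ae haeq]
        apply integral_prod_eps μ ε hmeas hindep hone hmone
        refine ⟨if k = -1 then j+1 else j, ?_⟩
        rw [Finset.mem_symmDiff]
        left
        refine ⟨TIdx_wit_mem k j hk0, fun hmem => ?_⟩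
        have hb1 := TIdx_mem_bound k j' _ hmem
        have hwit : j ≤ (if k = -1 then j+1 else j) ∧ (if k = -1 then j+1 else j) ≤ j+1 := by
          by_cases h : k = -1 <;> simp [h]
        rcases abs_cases (j - j') with ⟨e1,e2⟩|⟨e1,e2⟩ <;>
          rcases abs_cases k with ⟨p1,p2⟩|⟨p1,p2⟩ <;> omega)
    filter_upwards [hslln] with ω hω
    have hsplit : ∀ N : ℕ, (∑ n ∈ Finset.Icc (-(N : ℤ)) N,
        dimerFactorSeq ε ω n * dimerFactorSeq ε ω (n + m)) / (2 * (N:ℝ) + 1)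
        = (∑ n ∈ Finset.Icc (-(N : ℤ)) N, g n ω) / (2 * (N:ℝ) + 1)
          + ((N:ℝ) + (if (N:ℤ) % 2 = 0 then (1:ℝ) else 0)) / (2*(N:ℝ)+1) := by
      intro N
      rw [← sum_even_indicator N, ← add_div, ← Finset.sum_add_distrib]
      congr 1
      apply Finset.sum_congr rfl
      intro n _
      rw [hg]
      ring
    have hcomb := hω.add tendsto_even_density
    rw [zero_add] at hcomb
    have : (fun N : ℕ => (∑ n ∈ Finset.Icc (-(N : ℤ)) N,
        dimerFactorSeq ε ω n * dimerFactorSeq ε ω (n + m)) / (2 * (N:ℝ) + 1))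
        = fun N : ℕ => (∑ n ∈ Finset.Icc (-(N : ℤ)) N, g n ω) / (2 * (N:ℝ) + 1)
          + ((N:ℝ) + (if (N:ℤ) % 2 = 0 then (1:ℝ) else 0)) / (2*(N:ℝ)+1) :=
      funext hsplit
    rw [this]
    exact hcomb
  · -- m odd
    have hmodd : Odd m := hmo
    have hnev : ¬ Even m := by
      rw [← Int.not_odd_iff_even]
      exact not_not_intro hmodd
    rw [if_neg hm0, if_neg hnev]
    set L : ℕ := 2*m.natAbs + 10 with hL
    set g : ℤ → Ω → ℝ := fun n ω => dimerFactorSeq ε ω n * dimerFactorSeq ε ω (n+m) with hg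
    have hslln := slln_aux μ g L
      (fun n => (meas_v ε hmeas n).mul (meas_v ε hmeas (n+m)))
      (by
        filter_upwards [eps_ae_pm μ ε hmeas hone hmone] with ω hω n
        rw [hg]
        simp only
        rw [rep_odd ε ω m hmodd hω n, abs_prod_pm ε ω hω])
      (by
        intro n n' hnn
        have ha := aIdx_bound m n hmodd
        have ha' := aIdx_bound m n' hmodd
        have hab : 2 ≤ |aIdx m n - aIdx m n'| := by
          rw [hL, hML] at hnn
          rcases abs_cases (aIdx m n - aIdx m n') with ⟨e1,e2⟩|⟨e1,e2⟩ <;>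
            rcases abs_cases (n - n') with ⟨d1,d2⟩|⟨d1,d2⟩ <;>
            rcases abs_cases (2 * aIdx m n - n) with ⟨f1,f2⟩|⟨f1,f2⟩ <;>
            rcases abs_cases (2 * aIdx m n' - n') with ⟨q1,q2⟩|⟨q1,q2⟩ <;>
            rcases abs_cases m with ⟨p1,p2⟩|⟨p1,p2⟩ <;> omega
        have haeq : (fun ω => g n ω * g n' ω)
            =ᵐ[μ] fun ω => ∏ i ∈ symmDiff ({aIdx m n, aIdx m n + 1} : Finset ℤ)
              ({aIdx m n', aIdx m n' + 1} : Finset ℤ), ε i ω := by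
          filter_upwards [eps_ae_pm μ ε hmeas hone hmone] with ω hω
          rw [hg]
          simp only
          rw [rep_odd ε ω m hmodd hω n, rep_odd ε ω m hmodd hω n',
            prod_mul_prod_pm ε ω hω]
        rw [integral_congr_ae haeq]
        apply integral_prod_eps μ ε hmeas hindep hone hmone
        refine ⟨aIdx m n, ?_⟩
        rw [Finset.mem_symmDiff]
        left
        constructor
        · simp
        · simp only [Finset.mem_insert, Finset.mem_singleton]
          rcases abs_cases (aIdx m n - aIdx m n') with ⟨e1,e2⟩|⟨e1,e2⟩ <;> omega)
    filter_upwards [hslln] with ω hω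
    exact hω
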